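/- For every n ≥ 1, the string S_n satisfies δ(S_n) ≤ 2; in fact, d_k(S_n) ≤ 2k holds for every k ∈ {1,...,n}. -/

import Mathlib

/-- The set of distinct length-`k` contiguous substrings of `S`. -/
def substrings {α : Type} [DecidableEq α] (S : List α) (k : ℕ) : Finset (List α) :=
  ((Finset.range (S.length + 1)).image (fun i => (S.drop i).take k)).filter
    (fun t => t.length = k)

/-- `d_k(S)`: the number of distinct length-`k` substrings of `S`. -/
def subCount {α : Type} [DecidableEq α] (S : List α) (k : ℕ) : ℕ :=
  (substrings S k).card

/-- The measure `δ(S) = max { d_k(S)/k : 1 ≤ k ≤ |S| }` (with value 0 for the empty string). -/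
def delta {α : Type} [DecidableEq α] (S : List α) : ℚ :=
  if h : S = [] then 0
  else
    (Finset.Icc 1 S.length).sup'
      (Finset.nonempty_Icc.mpr (Nat.one_le_iff_ne_zero.mpr
        (fun h0 => h (List.length_eq_zero_iff.mp h0))))
      (fun k => (subCount S k : ℚ) / k)

/-- `Sn n`: the length-`n` prefix of the infinite string `S_∞` over `{a, b}`
(`a = false`, `b = true`) whose `i`-th character (1-based) is `b` iff `i` is a power of 2. -/
def Sn (n : ℕ) : List Bool :=
  (List.range n).map (fun i => (List.range (i + 2)).any (fun j => i + 1 == 2 ^ j))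


def g (m : ℕ) : Bool := (List.range (m + 2)).any (fun j => m + 1 == 2 ^ j)

lemma g_eq_true_iff (m : ℕ) : g m = true ↔ ∃ a, m + 1 = 2 ^ a := by
  simp only [g, List.any_eq_true, List.mem_range, beq_iff_eq]
  constructor
  · rintro ⟨j, _, h⟩; exact ⟨j, h⟩
  · rintro ⟨j, h⟩
    exact ⟨j, by have := Nat.lt_two_pow_self (n := j); omega, h⟩

def W (i k : ℕ) : List Bool := (List.range k).map (fun q => g (i + q))

lemma W_length (i k : ℕ) : (W i k).length = k := by simp [W]

lemma W_getElem (i k q : ℕ) (h : q < k) :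
    (W i k)[q]'(by rw [W_length]; exact h) = g (i + q) := by
  simp [W]


lemma mem_substrings_Sn {n k : ℕ} {t : List Bool} (ht : t ∈ substrings (Sn n) k) :
    ∃ i, i + k ≤ n ∧ t = W i k := by
  unfold substrings at ht
  rw [Finset.mem_filter, Finset.mem_image] at ht
  obtain ⟨⟨i, hi, rfl⟩, hlen⟩ := ht
  have hSnlen : (Sn n).length = n := by simp [Sn]
  have hi' : i < n + 1 := by
    have := Finset.mem_range.mp hi
    simpa [hSnlen] using this
  have hlen' : min k (n - i) = k := by simpa [hSnlen] using hlen
  have hik : i + k ≤ n := by omega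
  refine ⟨i, hik, ?_⟩
  apply List.ext_getElem
  · rw [W_length]; simp [hSnlen]; omega
  · intro q h1 h2
    rw [List.getElem_take, List.getElem_drop]
    simp only [W, List.getElem_map, List.getElem_range, Sn]
    rfl

def firstIdx : List Bool → ℕ
  | [] => 0
  | b :: t => if b then 0 else firstIdx t + 1

lemma firstIdx_le (t : List Bool) : firstIdx t ≤ t.length := by
  induction t with
  | nil => simp [firstIdx]
  | cons b t ih =>
    simp only [firstIdx, List.length_cons]
    split <;> omega

lemma getElem_firstIdx : ∀ (t : List Bool) (h : firstIdx t < t.length), t[firstIdx t] = true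
  | b :: t, h => by
    by_cases hb : b = true
    · simp [firstIdx, hb]
    · have hb' : b = false := by simp at hb; exact hb
      subst hb'
      have e : firstIdx (false :: t) = firstIdx t + 1 := by simp [firstIdx]
      rw [e] at h
      simp only [e, List.getElem_cons_succ]
      exact getElem_firstIdx t (by simpa using h)

lemma getElem_of_lt_firstIdx : ∀ (t : List Bool) (q : ℕ) (hq : q < t.length),
    q < firstIdx t → t[q] = false
  | b :: t, 0, hq, hlt => by
    simp only [firstIdx] at hlt
    by_cases hb : b = true
    · simp [hb] at hlt
    · simp at hb; simp [hb]
  | b :: t, q + 1, hq, hlt => by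
    simp only [List.getElem_cons_succ]
    apply getElem_of_lt_firstIdx
    simp only [firstIdx] at hlt
    split at hlt <;> omega

def secondIdx (t : List Bool) : ℕ := firstIdx t + 1 + firstIdx (t.drop (firstIdx t + 1))

lemma firstIdx_lt_secondIdx (t : List Bool) : firstIdx t < secondIdx t := by
  unfold secondIdx; omega

lemma getElem_secondIdx (t : List Bool) (h : secondIdx t < t.length) :
    t[secondIdx t] = true := by
  have hd : (t.drop (firstIdx t + 1)).length = t.length - (firstIdx t + 1) := by simp
  have hr : firstIdx (t.drop (firstIdx t + 1)) < (t.drop (firstIdx t + 1)).length := by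
    unfold secondIdx at h; omega
  have := getElem_firstIdx _ hr
  rw [List.getElem_drop] at this
  exact this

lemma getElem_of_between (t : List Bool) (q : ℕ) (hq : q < t.length)
    (h1 : firstIdx t < q) (h2 : q < secondIdx t) : t[q] = false := by
  obtain ⟨j, rfl⟩ : ∃ j, q = firstIdx t + 1 + j := ⟨q - (firstIdx t + 1), by omega⟩
  have hd : (t.drop (firstIdx t + 1)).length = t.length - (firstIdx t + 1) := by simp
  have hj : j < (t.drop (firstIdx t + 1)).length := by omega
  have := getElem_of_lt_firstIdx (t.drop (firstIdx t + 1)) j hj (by unfold secondIdx at h2; omega)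
  rw [List.getElem_drop] at this
  exact this

lemma window_second {i k p s : ℕ} (hs : s < k) (hps : p < s)
    (htp : g (i + p) = true) (hts : g (i + s) = true)
    (hbet : ∀ q, p < q → q < s → g (i + q) = false) :
    ∃ a, i + p + 1 = 2 ^ a ∧ s = p + 2 ^ a := by
  obtain ⟨a, ha⟩ := (g_eq_true_iff _).mp htp
  obtain ⟨b, hb⟩ := (g_eq_true_iff _).mp hts
  have hab : a < b := by
    have h1 : 2 ^ a < 2 ^ b := by omega
    exact (Nat.pow_lt_pow_iff_right one_lt_two).mp h1
  have h2 : 2 ^ a < 2 ^ (a + 1) := (Nat.pow_lt_pow_iff_right one_lt_two).mpr (by omega)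
  have hb' : b = a + 1 := by
    by_contra hne
    have h3 : 2 ^ (a + 1) < 2 ^ b :=
      (Nat.pow_lt_pow_iff_right one_lt_two).mpr (by omega)
    have hq1 : p < 2 ^ (a + 1) - i - 1 := by omega
    have hq2 : 2 ^ (a + 1) - i - 1 < s := by omega
    have hgq : g (i + (2 ^ (a + 1) - i - 1)) = true :=
      (g_eq_true_iff _).mpr ⟨a + 1, by omega⟩
    have := hbet _ hq1 hq2
    rw [hgq] at this
    exact Bool.true_eq_false.mp this
  refine ⟨a, ha, ?_⟩
  rw [hb'] at hb
  have h4 : 2 ^ (a + 1) = 2 * 2 ^ a := by ring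
  omega

lemma W_struct {i k : ℕ} (h2 : secondIdx (W i k) < k) :
    ∃ a, i + firstIdx (W i k) + 1 = 2 ^ a ∧
      secondIdx (W i k) = firstIdx (W i k) + 2 ^ a ∧ firstIdx (W i k) < 2 ^ a := by
  have hlen : (W i k).length = k := W_length i k
  have hps : firstIdx (W i k) < secondIdx (W i k) := firstIdx_lt_secondIdx _
  have htp : g (i + firstIdx (W i k)) = true := by
    rw [← W_getElem i k _ (by omega)]
    exact getElem_firstIdx _ (by omega)
  have hts : g (i + secondIdx (W i k)) = true := by
    rw [← W_getElem i k _ h2]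
    exact getElem_secondIdx _ (by omega)
  have hbet : ∀ q, firstIdx (W i k) < q → q < secondIdx (W i k) → g (i + q) = false := by
    intro q hq1 hq2
    rw [← W_getElem i k q (by omega)]
    exact getElem_of_between _ q (by omega) hq1 hq2
  obtain ⟨a, ha, hsa⟩ := window_second h2 hps htp hts hbet
  exact ⟨a, ha, hsa, by omega⟩

lemma subCount_Sn_le (n k : ℕ) (hk : 1 ≤ k) : subCount (Sn n) k ≤ 2 * k := by
  have hcard : subCount (Sn n) k ≤ (Finset.range (2 * k)).card := by
    apply Finset.card_le_card_of_injOn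
      (fun t => if secondIdx t < t.length then t.length + secondIdx t else firstIdx t)
    · intro t ht
      obtain ⟨i, hik, rfl⟩ := mem_substrings_Sn ht
      have hlen : (W i k).length = k := W_length i k
      simp only [Finset.mem_coe, Finset.mem_range]
      split
      · omega
      · have := firstIdx_le (W i k); omega
    · intro t ht t' ht' hF
      obtain ⟨i, hik, rfl⟩ := mem_substrings_Sn (Finset.mem_coe.mp ht)
      obtain ⟨i', hik', rfl⟩ := mem_substrings_Sn (Finset.mem_coe.mp ht')
      have hlen : (W i k).length = k := W_length i k
      have hlen' : (W i' k).length = k := W_length i' k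
      simp only [hlen, hlen'] at hF
      by_cases h2 : secondIdx (W i k) < k
      · -- both have a second true
        have h2' : secondIdx (W i' k) < k := by
          by_contra hcon
          rw [if_pos h2, if_neg (by omega)] at hF
          have := firstIdx_le (W i' k)
          have hps := firstIdx_lt_secondIdx (W i k)
          omega
        rw [if_pos h2, if_pos h2'] at hF
        have hs : secondIdx (W i k) = secondIdx (W i' k) := by omega
        obtain ⟨a, ha, hsa, hpa⟩ := W_struct h2
        obtain ⟨a', ha', hsa', hpa'⟩ := W_struct h2'
        have haa : a = a' := by
          rcases lt_trichotomy a a' with h | h | h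
          · have : 2 ^ (a + 1) ≤ 2 ^ a' := Nat.pow_le_pow_right (by norm_num) (by omega)
            have h4 : 2 ^ (a + 1) = 2 * 2 ^ a := by ring
            omega
          · exact h
          · have : 2 ^ (a' + 1) ≤ 2 ^ a := Nat.pow_le_pow_right (by norm_num) (by omega)
            have h4 : 2 ^ (a' + 1) = 2 * 2 ^ a' := by ring
            omega
        have hii : i = i' := by rw [haa] at ha hsa; omega
        rw [hii]
      · have h2' : ¬ secondIdx (W i' k) < k := by
          by_contra hcon
          rw [if_neg h2, if_pos (by omega)] at hF
          have := firstIdx_le (W i k)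
          have hps := firstIdx_lt_secondIdx (W i' k)
          omega
        rw [if_neg h2, if_neg h2'] at hF
        -- both have at most one true; equal entrywise
        apply List.ext_getElem (by omega)
        intro q hq hq'
        rcases lt_trichotomy q (firstIdx (W i k)) with hc | hc | hc
        · rw [getElem_of_lt_firstIdx _ q hq hc,
            getElem_of_lt_firstIdx _ q hq' (by omega)]
        · subst hc
          rw [getElem_firstIdx _ (by omega)]
          have h5 : (W i' k)[firstIdx (W i' k)]'(by omega) = true := getElem_firstIdx _ (by omega)
          simp only [hF]
          exact h5.symm
        · rw [getElem_of_between _ q hq (by omega) (by omega),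
            getElem_of_between _ q hq' (by omega) (by omega)]
  simpa using hcard

/-- For every `n ≥ 1`, the string `S_n` satisfies `d_k(S_n) ≤ 2k` for every
`k ∈ {1,...,n}`; consequently `δ(S_n) ≤ 2`. -/
theorem delta_Sn_le_two (n : ℕ) (hn : 1 ≤ n) :
    (∀ k ∈ Finset.Icc 1 n, subCount (Sn n) k ≤ 2 * k) ∧ delta (Sn n) ≤ 2 := by
  constructor
  · intro k hk
    exact subCount_Sn_le n k (Finset.mem_Icc.mp hk).1
  · have hne : Sn n ≠ [] := by
      intro h
      have h1 : (Sn n).length = n := by simp [Sn]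
      rw [h] at h1
      simp at h1
      omega
    unfold delta
    rw [dif_neg hne]
    apply Finset.sup'_le
    intro k hk
    obtain ⟨hk1, hk2⟩ := Finset.mem_Icc.mp hk
    have hc := subCount_Sn_le n k hk1
    have hkpos : (0 : ℚ) < (k : ℚ) := by exact_mod_cast hk1
    rw [div_le_iff₀ hkpos]
    calc (subCount (Sn n) k : ℚ) ≤ ((2 * k : ℕ) : ℚ) := by exact_mod_cast hc
      _ = 2 * (k : ℚ) := by push_cast; ring
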